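/- Suppose K* ∈ ℝ^{k×n} is stable and satisfies K* = γ(R + γBᵀP_{K*}B)⁻¹BᵀP_{K*}A (equivalently E_{K*} = 0), and set Σ* := (τ/2)(R + γBᵀP_{K*}B)⁻¹. Then for every stable K ∈ ℝ^{k×n} and every symmetric positive definite Σ ∈ ℝ^{k×k}, C(K,Σ) ≥ C(K*,Σ*); i.e. the pair (K*,Σ*) minimizes the entropy-regularized cost C over all admissible policy parameters. -/

import Mathlib

open Matrix


noncomputable def spec {m l : ℕ} (M : Matrix (Fin m) (Fin l) ℝ) : ℝ :=
  ‖LinearMap.toContinuousLinearMap (Matrix.toEuclideanLin M)‖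

noncomputable def sigMin {m l : ℕ} (M : Matrix (Fin m) (Fin l) ℝ) : ℝ :=
  sInf {r : ℝ | ∃ x : EuclideanSpace ℝ (Fin l), ‖x‖ = 1 ∧
    r = ‖LinearMap.toContinuousLinearMap (Matrix.toEuclideanLin M) x‖}

noncomputable def frob {m l : ℕ} (M : Matrix (Fin m) (Fin l) ℝ) : ℝ :=
  Real.sqrt (Matrix.trace (Mᵀ * M))

def loewner {m : ℕ} (X Y : Matrix (Fin m) (Fin m) ℝ) : Prop :=
  (Y - X).PosSemidef

noncomputable def Pmat {n k : ℕ} (γ : ℝ) (A : Matrix (Fin n) (Fin n) ℝ)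
    (B : Matrix (Fin n) (Fin k) ℝ) (Q : Matrix (Fin n) (Fin n) ℝ)
    (R : Matrix (Fin k) (Fin k) ℝ) (K : Matrix (Fin k) (Fin n) ℝ) :
    Matrix (Fin n) (Fin n) ℝ :=
  ∑' t : ℕ, γ ^ t • (((A - B * K)ᵀ) ^ t * (Q + Kᵀ * R * K) * (A - B * K) ^ t)

noncomputable def Emat {n k : ℕ} (γ : ℝ) (A : Matrix (Fin n) (Fin n) ℝ)
    (B : Matrix (Fin n) (Fin k) ℝ) (Q : Matrix (Fin n) (Fin n) ℝ)
    (R : Matrix (Fin k) (Fin k) ℝ) (K : Matrix (Fin k) (Fin n) ℝ) :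
    Matrix (Fin k) (Fin n) ℝ :=
  -(γ • (Bᵀ * Pmat γ A B Q R K * (A - B * K))) + R * K

noncomputable def Smat {n k : ℕ} (γ : ℝ) (A : Matrix (Fin n) (Fin n) ℝ)
    (B : Matrix (Fin n) (Fin k) ℝ) (W : Matrix (Fin n) (Fin n) ℝ)
    (D₀ : Matrix (Fin n) (Fin n) ℝ) (K : Matrix (Fin k) (Fin n) ℝ)
    (Sg : Matrix (Fin k) (Fin k) ℝ) : Matrix (Fin n) (Fin n) ℝ :=
  ∑' t : ℕ, γ ^ t •
    ((A - B * K) ^ t * D₀ * ((A - B * K)ᵀ) ^ t +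
      ∑ s ∈ Finset.Icc 1 t,
        (A - B * K) ^ (t - s) * (B * Sg * Bᵀ + W) * ((A - B * K)ᵀ) ^ (t - s))

noncomputable def Cost {n k : ℕ} (γ τ : ℝ) (A : Matrix (Fin n) (Fin n) ℝ)
    (B : Matrix (Fin n) (Fin k) ℝ) (Q : Matrix (Fin n) (Fin n) ℝ)
    (R : Matrix (Fin k) (Fin k) ℝ) (W : Matrix (Fin n) (Fin n) ℝ)
    (D₀ : Matrix (Fin n) (Fin n) ℝ) (K : Matrix (Fin k) (Fin n) ℝ)
    (Sg : Matrix (Fin k) (Fin k) ℝ) : ℝ :=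
  Matrix.trace (D₀ * Pmat γ A B Q R K) +
    (1 / (1 - γ)) *
      (Matrix.trace (Sg * (R + γ • (Bᵀ * Pmat γ A B Q R K * B))) -
        (τ / 2) * ((k : ℝ) + Real.log ((2 * Real.pi) ^ k * Sg.det)) +
        γ * Matrix.trace (W * Pmat γ A B Q R K))

noncomputable def fent {n k : ℕ} (γ τ : ℝ) (A : Matrix (Fin n) (Fin n) ℝ)
    (B : Matrix (Fin n) (Fin k) ℝ) (Q : Matrix (Fin n) (Fin n) ℝ)
    (R : Matrix (Fin k) (Fin k) ℝ) (K : Matrix (Fin k) (Fin n) ℝ)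
    (Sg : Matrix (Fin k) (Fin k) ℝ) : ℝ :=
  (τ / (2 * (1 - γ))) * Real.log Sg.det -
    (1 / (1 - γ)) * Matrix.trace (Sg * (R + γ • (Bᵀ * Pmat γ A B Q R K * B)))

open scoped Matrix.Norms.L2Operator

namespace LQ
variable {n : ℕ}

lemma spec_eq_norm (M : Matrix (Fin n) (Fin n) ℝ) : spec M = ‖M‖ := rfl

lemma norm_transpose (M : Matrix (Fin n) (Fin n) ℝ) : ‖Mᵀ‖ = ‖M‖ := by
  rw [← conjTranspose_eq_transpose_of_trivial]
  exact Matrix.l2_opNorm_conjTranspose M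

lemma norm_conj_le (N C : Matrix (Fin n) (Fin n) ℝ) (t : ℕ) :
    ‖(Nᵀ) ^ t * C * N ^ t‖ ≤ ‖N‖ ^ t * ‖C‖ * ‖N‖ ^ t := by
  induction t with
  | zero => simp
  | succ t ih =>
    have h1 : (Nᵀ) ^ (t+1) * C * N ^ (t+1) = Nᵀ * ((Nᵀ) ^ t * C * N ^ t) * N := by
      rw [pow_succ' (Nᵀ), pow_succ N]; noncomm_ring
    rw [h1]
    calc ‖Nᵀ * ((Nᵀ) ^ t * C * N ^ t) * N‖ ≤ ‖Nᵀ * ((Nᵀ) ^ t * C * N ^ t)‖ * ‖N‖ :=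
          norm_mul_le _ _
      _ ≤ ‖Nᵀ‖ * ‖(Nᵀ) ^ t * C * N ^ t‖ * ‖N‖ := by
          gcongr; exact norm_mul_le _ _
      _ ≤ ‖N‖ * (‖N‖ ^ t * ‖C‖ * ‖N‖ ^ t) * ‖N‖ := by
          rw [norm_transpose]; gcongr
      _ = ‖N‖ ^ (t+1) * ‖C‖ * ‖N‖ ^ (t+1) := by ring

end LQ

namespace LQ2
variable {n : ℕ} {γ : ℝ} {N : Matrix (Fin n) (Fin n) ℝ}

/-- The geometric ratio. -/
lemma ratio_lt_one (hγ0 : 0 < γ) (hN : spec N < 1 / Real.sqrt γ) :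
    γ * ‖N‖ ^ 2 < 1 := by
  rw [LQ.spec_eq_norm] at hN
  have hs : 0 < Real.sqrt γ := Real.sqrt_pos.2 hγ0
  have h1 : Real.sqrt γ * ‖N‖ < 1 := by
    rw [lt_div_iff₀ hs] at hN; linarith [mul_comm (Real.sqrt γ) ‖N‖]
  have h0 : 0 ≤ Real.sqrt γ * ‖N‖ := by positivity
  nlinarith [Real.sq_sqrt hγ0.le, norm_nonneg N, Real.sqrt_nonneg γ]

lemma norm_term_le (hγ0 : 0 < γ) (C : Matrix (Fin n) (Fin n) ℝ) (t : ℕ) :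
    ‖γ ^ t • ((Nᵀ) ^ t * C * N ^ t)‖ ≤ ‖C‖ * (γ * ‖N‖ ^ 2) ^ t := by
  rw [norm_smul, Real.norm_eq_abs, abs_pow, abs_of_pos hγ0]
  calc γ ^ t * ‖(Nᵀ) ^ t * C * N ^ t‖ ≤ γ ^ t * (‖N‖ ^ t * ‖C‖ * ‖N‖ ^ t) := by
        have h := LQ.norm_conj_le N C t
        have h2 : (0:ℝ) ≤ γ ^ t := by positivity
        exact mul_le_mul_of_nonneg_left h h2
    _ = ‖C‖ * (γ * ‖N‖ ^ 2) ^ t := by rw [mul_pow, ← pow_mul]; ring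

lemma summable_conj (hγ0 : 0 < γ) (hN : spec N < 1 / Real.sqrt γ)
    (C : Matrix (Fin n) (Fin n) ℝ) :
    Summable (fun t : ℕ => γ ^ t • ((Nᵀ) ^ t * C * N ^ t)) := by
  have hr0 : (0:ℝ) ≤ γ * ‖N‖ ^ 2 := by positivity
  have hr1 := ratio_lt_one hγ0 hN
  exact Summable.of_norm_bounded ((summable_geometric_of_lt_one hr0 hr1).mul_left ‖C‖)
    (norm_term_le hγ0 C)

end LQ2

namespace LQ3
variable {n : ℕ}

noncomputable def conjCLM (N : Matrix (Fin n) (Fin n) ℝ) (γ : ℝ) :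
    Matrix (Fin n) (Fin n) ℝ →L[ℝ] Matrix (Fin n) (Fin n) ℝ :=
  LinearMap.toContinuousLinearMap
    { toFun := fun X => γ • (Nᵀ * X * N)
      map_add' := fun X Y => by
        show γ • (Nᵀ * (X + Y) * N) = _
        rw [Matrix.mul_add, Matrix.add_mul, smul_add]
      map_smul' := fun c X => by
        show γ • (Nᵀ * (c • X) * N) = c • (γ • (Nᵀ * X * N))
        rw [mul_smul_comm, smul_mul_assoc, smul_comm] }

@[simp] lemma conjCLM_apply (N : Matrix (Fin n) (Fin n) ℝ) (γ : ℝ)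
    (X : Matrix (Fin n) (Fin n) ℝ) : conjCLM N γ X = γ • (Nᵀ * X * N) := rfl

noncomputable def transCLM :
    Matrix (Fin n) (Fin n) ℝ →L[ℝ] Matrix (Fin n) (Fin n) ℝ :=
  LinearMap.toContinuousLinearMap
    { toFun := fun X => Xᵀ
      map_add' := fun X Y => by
        show (X + Y)ᵀ = Xᵀ + Yᵀ
        rw [Matrix.transpose_add]
      map_smul' := fun c X => by
        show (c • X)ᵀ = c • Xᵀ
        rw [Matrix.transpose_smul] }

@[simp] lemma transCLM_apply (X : Matrix (Fin n) (Fin n) ℝ) :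
    (transCLM : Matrix (Fin n) (Fin n) ℝ →L[ℝ] _) X = Xᵀ := rfl

noncomputable def quadCLM (x : Fin n → ℝ) :
    Matrix (Fin n) (Fin n) ℝ →L[ℝ] ℝ :=
  LinearMap.toContinuousLinearMap
    { toFun := fun X => dotProduct x (X *ᵥ x)
      map_add' := fun X Y => by
        show dotProduct x ((X + Y) *ᵥ x) = _
        rw [Matrix.add_mulVec, dotProduct_add]
      map_smul' := fun c X => by
        show dotProduct x ((c • X) *ᵥ x) = c • dotProduct x (X *ᵥ x)
        rw [Matrix.smul_mulVec, dotProduct_smul] }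

@[simp] lemma quadCLM_apply (x : Fin n → ℝ) (X : Matrix (Fin n) (Fin n) ℝ) :
    quadCLM x X = dotProduct x (X *ᵥ x) := rfl

variable {γ : ℝ} {N : Matrix (Fin n) (Fin n) ℝ}

noncomputable def Tsum (γ : ℝ) (N C : Matrix (Fin n) (Fin n) ℝ) :
    Matrix (Fin n) (Fin n) ℝ :=
  ∑' t : ℕ, γ ^ t • ((Nᵀ) ^ t * C * N ^ t)

lemma hasSum_conj (hγ0 : 0 < γ) (hN : spec N < 1 / Real.sqrt γ)
    (C : Matrix (Fin n) (Fin n) ℝ) :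
    HasSum (fun t : ℕ => γ ^ t • ((Nᵀ) ^ t * C * N ^ t)) (Tsum γ N C) :=
  (LQ2.summable_conj hγ0 hN C).hasSum

lemma shift_term (C : Matrix (Fin n) (Fin n) ℝ) (t : ℕ) :
    γ ^ (t+1) • ((Nᵀ) ^ (t+1) * C * N ^ (t+1)) =
      conjCLM N γ (γ ^ t • ((Nᵀ) ^ t * C * N ^ t)) := by
  have hm : (Nᵀ) ^ (t+1) * C * N ^ (t+1) = Nᵀ * ((Nᵀ) ^ t * C * N ^ t) * N := by
    rw [pow_succ' (Nᵀ), pow_succ N]; noncomm_ring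
  rw [conjCLM_apply, mul_smul_comm, smul_mul_assoc, smul_smul, hm, ← pow_succ']

lemma bellman (hγ0 : 0 < γ) (hN : spec N < 1 / Real.sqrt γ)
    (C : Matrix (Fin n) (Fin n) ℝ) :
    Tsum γ N C = C + γ • (Nᵀ * Tsum γ N C * N) := by
  have hs := LQ2.summable_conj hγ0 hN C
  have h0 : Tsum γ N C =
      (γ ^ 0 • ((Nᵀ) ^ 0 * C * N ^ 0)) +
        ∑' t : ℕ, γ ^ (t+1) • ((Nᵀ) ^ (t+1) * C * N ^ (t+1)) := Summable.tsum_eq_zero_add hs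
  have h2 : HasSum (fun t : ℕ => conjCLM N γ (γ ^ t • ((Nᵀ) ^ t * C * N ^ t)))
      (conjCLM N γ (Tsum γ N C)) := (hasSum_conj hγ0 hN C).mapL _
  have h3 : ∑' t : ℕ, γ ^ (t+1) • ((Nᵀ) ^ (t+1) * C * N ^ (t+1)) =
      γ • (Nᵀ * Tsum γ N C * N) := by
    simp_rw [shift_term]
    exact h2.tsum_eq
  rw [h3] at h0
  conv_lhs => rw [h0]
  simp

lemma fixed_eq_zero (hγ0 : 0 < γ) (hN : spec N < 1 / Real.sqrt γ)
    {X : Matrix (Fin n) (Fin n) ℝ} (hX : X = γ • (Nᵀ * X * N)) : X = 0 := by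
  have key : ∀ t : ℕ, X = γ ^ t • ((Nᵀ) ^ t * X * N ^ t) := by
    intro t
    induction t with
    | zero => simp
    | succ t ih =>
      calc X = γ • (Nᵀ * X * N) := hX
        _ = γ • (Nᵀ * (γ ^ t • ((Nᵀ) ^ t * X * N ^ t)) * N) := by rw [← ih]
        _ = γ ^ (t+1) • ((Nᵀ) ^ (t+1) * X * N ^ (t+1)) := (shift_term X t).symm
  have hb : ∀ t : ℕ, ‖X‖ ≤ ‖X‖ * (γ * ‖N‖ ^ 2) ^ t := by
    intro t
    calc ‖X‖ = ‖γ ^ t • ((Nᵀ) ^ t * X * N ^ t)‖ := by rw [← key t]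
      _ ≤ ‖X‖ * (γ * ‖N‖ ^ 2) ^ t := LQ2.norm_term_le hγ0 X t
  have hr0 : (0:ℝ) ≤ γ * ‖N‖ ^ 2 := by positivity
  have hr1 := LQ2.ratio_lt_one hγ0 hN
  have hlim : Filter.Tendsto (fun t : ℕ => ‖X‖ * (γ * ‖N‖ ^ 2) ^ t) Filter.atTop (nhds 0) := by
    have := tendsto_pow_atTop_nhds_zero_of_lt_one hr0 hr1
    simpa using this.const_mul ‖X‖
  have : ‖X‖ ≤ 0 := ge_of_tendsto hlim (Filter.Eventually.of_forall hb)
  exact norm_le_zero_iff.mp this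

lemma tsum_unique (hγ0 : 0 < γ) (hN : spec N < 1 / Real.sqrt γ)
    {C P : Matrix (Fin n) (Fin n) ℝ} (hP : P = C + γ • (Nᵀ * P * N)) :
    P = Tsum γ N C := by
  have hT := bellman hγ0 hN C
  have hX : P - Tsum γ N C = γ • (Nᵀ * (P - Tsum γ N C) * N) := by
    calc P - Tsum γ N C
        = (C + γ • (Nᵀ * P * N)) - (C + γ • (Nᵀ * Tsum γ N C * N)) := by rw [← hP, ← hT]
      _ = γ • (Nᵀ * (P - Tsum γ N C) * N) := by
          rw [Matrix.mul_sub, Matrix.sub_mul, smul_sub]; abel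
  exact sub_eq_zero.mp (fixed_eq_zero hγ0 hN hX)

lemma psd_tsum (hγ0 : 0 < γ) (hN : spec N < 1 / Real.sqrt γ)
    {C : Matrix (Fin n) (Fin n) ℝ} (hC : C.PosSemidef) :
    (Tsum γ N C).PosSemidef := by
  have hCt : Cᵀ = C := by
    rw [← Matrix.conjTranspose_eq_transpose_of_trivial]; exact hC.1
  have hs := hasSum_conj hγ0 hN C
  refine Matrix.PosSemidef.of_dotProduct_mulVec_nonneg ?_ ?_
  · have h1 : HasSum (fun t : ℕ => (γ ^ t • ((Nᵀ) ^ t * C * N ^ t))ᵀ)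
        ((Tsum γ N C)ᵀ) := hs.mapL transCLM
    have h2 : (fun t : ℕ => (γ ^ t • ((Nᵀ) ^ t * C * N ^ t))ᵀ) =
        fun t : ℕ => γ ^ t • ((Nᵀ) ^ t * C * N ^ t) := by
      funext t
      rw [Matrix.transpose_smul, Matrix.transpose_mul, Matrix.transpose_mul,
        Matrix.transpose_pow, Matrix.transpose_pow, Matrix.transpose_transpose, hCt,
        Matrix.mul_assoc]
    rw [h2] at h1
    show (Tsum γ N C)ᴴ = Tsum γ N C
    rw [Matrix.conjTranspose_eq_transpose_of_trivial]
    exact h1.unique hs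
  · intro x
    have h1 : HasSum (fun t : ℕ => quadCLM x (γ ^ t • ((Nᵀ) ^ t * C * N ^ t)))
        (quadCLM x (Tsum γ N C)) := hs.mapL _
    have h2 : ∀ t : ℕ, quadCLM x (γ ^ t • ((Nᵀ) ^ t * C * N ^ t)) =
        γ ^ t * dotProduct (N ^ t *ᵥ x) (C *ᵥ (N ^ t *ᵥ x)) := by
      intro t
      rw [quadCLM_apply, Matrix.smul_mulVec, dotProduct_smul, smul_eq_mul]
      congr 1
      rw [← Matrix.mulVec_mulVec, ← Matrix.mulVec_mulVec, Matrix.dotProduct_mulVec,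
        ← Matrix.transpose_pow, Matrix.vecMul_transpose]
    have h3 : 0 ≤ quadCLM x (Tsum γ N C) := by
      rw [← h1.tsum_eq]
      apply tsum_nonneg
      intro t
      rw [h2 t]
      have := hC.dotProduct_mulVec_nonneg (N ^ t *ᵥ x)
      rw [star_trivial] at this
      positivity
    simpa using h3

end LQ3

section PSqrt
open scoped MatrixOrder

noncomputable def Matrix.PosSemidef.sqrt {n : ℕ} {M : Matrix (Fin n) (Fin n) ℝ}
    (_h : M.PosSemidef) : Matrix (Fin n) (Fin n) ℝ := CFC.sqrt M

lemma Matrix.PosSemidef.sqrt_mul_self {n : ℕ} {M : Matrix (Fin n) (Fin n) ℝ}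
    (h : M.PosSemidef) : h.sqrt * h.sqrt = M :=
  CFC.sqrt_mul_sqrt_self M h.nonneg

lemma Matrix.PosSemidef.posSemidef_sqrt {n : ℕ} {M : Matrix (Fin n) (Fin n) ℝ}
    (h : M.PosSemidef) : h.sqrt.PosSemidef :=
  (CFC.sqrt_nonneg M).posSemidef

end PSqrt

namespace LQ4
variable {n m : ℕ}

lemma herm_transpose {M : Matrix (Fin n) (Fin n) ℝ} (h : M.IsHermitian) : Mᵀ = M := by
  rw [← Matrix.conjTranspose_eq_transpose_of_trivial]; exact h

lemma psd_of_transpose_form {M : Matrix (Fin n) (Fin n) ℝ} (hM : M.PosSemidef)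
    (B : Matrix (Fin n) (Fin m) ℝ) : (Bᵀ * M * B).PosSemidef := by
  have := hM.conjTranspose_mul_mul_same B
  rwa [Matrix.conjTranspose_eq_transpose_of_trivial] at this

lemma psd_smul {M : Matrix (Fin n) (Fin n) ℝ} (hM : M.PosSemidef) {c : ℝ} (hc : 0 ≤ c) :
    (c • M).PosSemidef := by
  refine Matrix.PosSemidef.of_dotProduct_mulVec_nonneg ?_ ?_
  · show (c • M)ᴴ = c • M
    rw [Matrix.conjTranspose_smul, star_trivial, hM.1]
  · intro x
    have := hM.dotProduct_mulVec_nonneg x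
    rw [Matrix.smul_mulVec, dotProduct_smul, smul_eq_mul]
    positivity

lemma trace_nonneg_of_psd {M : Matrix (Fin n) (Fin n) ℝ} (h : M.PosSemidef) :
    0 ≤ M.trace := by
  rw [Matrix.trace]
  apply Finset.sum_nonneg
  intro i _
  have h2 := h.dotProduct_mulVec_nonneg (Pi.single i 1)
  rw [star_trivial] at h2
  simpa [dotProduct, Matrix.mulVec_single, Matrix.diag, Pi.single_apply,
    Finset.sum_ite_eq'] using h2

lemma trace_mul_nonneg {X Y : Matrix (Fin n) (Fin n) ℝ}
    (hX : X.PosSemidef) (hY : Y.PosSemidef) : 0 ≤ (X * Y).trace := by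
  have h1 : X * Y = hX.sqrt * (hX.sqrt * Y) := by
    rw [← Matrix.mul_assoc, hX.sqrt_mul_self]
  have h2 : (X * Y).trace = (hX.sqrt * Y * hX.sqrt).trace := by
    rw [h1, Matrix.trace_mul_comm, Matrix.mul_assoc]
  rw [h2]
  apply trace_nonneg_of_psd
  have h3 := hY.conjTranspose_mul_mul_same hX.sqrt
  rwa [hX.posSemidef_sqrt.1] at h3

lemma trace_eq_sum_eigenvalues {A : Matrix (Fin n) (Fin n) ℝ} (hA : A.IsHermitian) :
    A.trace = ∑ i, hA.eigenvalues i := by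
  have h0 : ((Matrix.IsHermitian.eigenvectorUnitary hA : Matrix (Fin n) (Fin n) ℝ)) *
      (star (Matrix.IsHermitian.eigenvectorUnitary hA : Matrix (Fin n) (Fin n) ℝ)) = 1 :=
    (Matrix.mem_unitaryGroup_iff).mp (Matrix.IsHermitian.eigenvectorUnitary hA).2
  have h0' : (star (Matrix.IsHermitian.eigenvectorUnitary hA : Matrix (Fin n) (Fin n) ℝ)) *
      ((Matrix.IsHermitian.eigenvectorUnitary hA : Matrix (Fin n) (Fin n) ℝ)) = 1 :=
    Unitary.coe_star_mul_self _
  conv_lhs => rw [hA.spectral_theorem, Unitary.conjStarAlgAut_apply]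
  rw [Matrix.trace_mul_cycle, h0', Matrix.one_mul]
  simp [Matrix.trace_diagonal]

lemma trace_ge_k_add_log_det {A : Matrix (Fin n) (Fin n) ℝ} (hA : A.PosDef) :
    (n : ℝ) + Real.log A.det ≤ A.trace := by
  have hH := hA.isHermitian
  have hev := hA.eigenvalues_pos
  have hdet : A.det = ∏ i, hH.eigenvalues i := by
    have := hH.det_eq_prod_eigenvalues
    simpa using this
  have htr : A.trace = ∑ i, hH.eigenvalues i := trace_eq_sum_eigenvalues hH
  rw [hdet, htr, Real.log_prod (fun i _ => (hev i).ne')]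
  have h1 : ∀ i ∈ Finset.univ, Real.log (hH.eigenvalues i) ≤ hH.eigenvalues i - 1 :=
    fun i _ => Real.log_le_sub_one_of_pos (hev i)
  calc (n : ℝ) + ∑ i, Real.log (hH.eigenvalues i)
      ≤ (n : ℝ) + ∑ i, (hH.eigenvalues i - 1) := by
        gcongr with i hi
        exact Real.log_le_sub_one_of_pos (hev i)
    _ = ∑ i, hH.eigenvalues i := by
        rw [Finset.sum_sub_distrib]
        simp
end LQ4

namespace LQ5
variable {k : ℕ}

lemma pd_smul {M : Matrix (Fin k) (Fin k) ℝ} (hM : M.PosDef) {c : ℝ} (hc : 0 < c) :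
    (c • M).PosDef := by
  refine Matrix.PosDef.of_dotProduct_mulVec_pos ?_ ?_
  · show (c • M)ᴴ = c • M
    rw [Matrix.conjTranspose_smul, star_trivial, hM.1]
  · intro x hx
    have h := hM.dotProduct_mulVec_pos hx
    rw [Matrix.smul_mulVec, dotProduct_smul, smul_eq_mul]
    exact mul_pos hc h

lemma pd_conj {M S : Matrix (Fin k) (Fin k) ℝ} (hM : M.PosDef) (hS : S.PosDef) :
    (hM.posSemidef.sqrt * S * hM.posSemidef.sqrt).PosDef := by
  set q := hM.posSemidef.sqrt with hq
  have hqherm := hM.posSemidef.posSemidef_sqrt.1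
  have hqt : qᵀ = q := LQ4.herm_transpose hqherm
  refine Matrix.PosDef.of_dotProduct_mulVec_pos ?_ ?_
  · show (q * S * q)ᴴ = q * S * q
    rw [Matrix.conjTranspose_mul, Matrix.conjTranspose_mul, hqherm, hS.1, Matrix.mul_assoc]
  · intro x hx
    have hqx : q *ᵥ x ≠ 0 := by
      intro h0
      have hMx : M *ᵥ x = 0 := by
        rw [← hM.posSemidef.sqrt_mul_self, ← Matrix.mulVec_mulVec, ← hq, h0,
          Matrix.mulVec_zero]
      have h := hM.dotProduct_mulVec_pos hx
      rw [hMx, dotProduct_zero] at h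
      exact lt_irrefl _ h
    have key : dotProduct (star x) ((q * S * q) *ᵥ x) =
        dotProduct (star (q *ᵥ x)) (S *ᵥ (q *ᵥ x)) := by
      rw [star_trivial, star_trivial, ← Matrix.mulVec_mulVec, ← Matrix.mulVec_mulVec,
        Matrix.dotProduct_mulVec]
      have hvm : x ᵥ* q = q *ᵥ x := by
        conv_lhs => rw [← hqt]
        rw [Matrix.vecMul_transpose]
      rw [hvm]
    rw [key]
    exact hS.dotProduct_mulVec_pos hqx

lemma entropy_core {M S : Matrix (Fin k) (Fin k) ℝ} (hM : M.PosDef) (hS : S.PosDef)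
    {c : ℝ} (hc : 0 < c) :
    (k : ℝ) + (k : ℝ) * Real.log c + Real.log M.det + Real.log S.det ≤
      c * (S * M).trace := by
  set q := hM.posSemidef.sqrt with hq
  have hqq : q * q = M := hM.posSemidef.sqrt_mul_self
  have hY : (c • (q * S * q)).PosDef := pd_smul (pd_conj hM hS) hc
  have htr : (c • (q * S * q)).trace = c * (S * M).trace := by
    rw [Matrix.trace_smul, smul_eq_mul]
    congr 1
    rw [Matrix.trace_mul_cycle, hqq, Matrix.trace_mul_comm]
  have hdetM : 0 < M.det := hM.det_pos
  have hdetS : 0 < S.det := hS.det_pos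
  have hdq : (q * S * q).det = M.det * S.det := by
    rw [Matrix.det_mul, Matrix.det_mul]
    have : q.det * q.det = M.det := by rw [← Matrix.det_mul, hqq]
    nlinarith [this]
  have hdet : (c • (q * S * q)).det = c ^ k * (M.det * S.det) := by
    rw [Matrix.det_smul, hdq]; simp
  have hlog : Real.log ((c • (q * S * q)).det) =
      (k : ℝ) * Real.log c + Real.log M.det + Real.log S.det := by
    rw [hdet, Real.log_mul (by positivity) (by positivity),
      Real.log_mul hdetM.ne' hdetS.ne', Real.log_pow]
    push_cast; ring
  have := LQ4.trace_ge_k_add_log_det hY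
  rw [hlog, htr] at this
  linarith

end LQ5

namespace LQ6

lemma diff_eq {n : ℕ} (γ : ℝ) (Nm CQ Z P P' : Matrix (Fin n) (Fin n) ℝ)
    (h1 : P = CQ + γ • (Nmᵀ * P * Nm))
    (h2 : P' = CQ + γ • (Nmᵀ * P' * Nm) - Z) :
    P - P' = Z + γ • (Nmᵀ * (P - P') * Nm) := by
  calc P - P'
      = (CQ + γ • (Nmᵀ * P * Nm)) - (CQ + γ • (Nmᵀ * P' * Nm) - Z) := by
        conv_lhs => rw [h1, h2]
    _ = Z + γ • (Nmᵀ * (P - P') * Nm) := by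
        rw [Matrix.mul_sub, Matrix.sub_mul, smul_sub]; abel

end LQ6


set_option maxHeartbeats 2000000 in
/-- The pair `(K*, Σ*)` minimizes the entropy-regularized LQC cost `C` over all
stable `K` and symmetric positive definite `Σ`. -/
theorem stmt1 (n k : ℕ) (hn : 0 < n) (hk : 0 < k)
    (γ τ : ℝ) (hγ0 : 0 < γ) (hγ1 : γ < 1) (hτ : 0 < τ)
    (A : Matrix (Fin n) (Fin n) ℝ) (B : Matrix (Fin n) (Fin k) ℝ)
    (Q : Matrix (Fin n) (Fin n) ℝ) (hQ : Q.PosSemidef)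
    (R : Matrix (Fin k) (Fin k) ℝ) (hR : R.PosDef)
    (W : Matrix (Fin n) (Fin n) ℝ) (hW : W.PosSemidef)
    (D₀ : Matrix (Fin n) (Fin n) ℝ) (hD₀ : D₀.PosSemidef) (hμ : 0 < sigMin D₀)
    (Kstar : Matrix (Fin k) (Fin n) ℝ)
    (hKstar : spec (A - B * Kstar) < 1 / Real.sqrt γ)
    (hfix : Kstar =
      γ • ((R + γ • (Bᵀ * Pmat γ A B Q R Kstar * B))⁻¹ * (Bᵀ * Pmat γ A B Q R Kstar * A)))
    (Sgstar : Matrix (Fin k) (Fin k) ℝ)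
    (hSgstar : Sgstar = (τ / 2) • (R + γ • (Bᵀ * Pmat γ A B Q R Kstar * B))⁻¹)
    (K : Matrix (Fin k) (Fin n) ℝ) (hK : spec (A - B * K) < 1 / Real.sqrt γ)
    (Sg : Matrix (Fin k) (Fin k) ℝ) (hSg : Sg.PosDef) :
    Cost γ τ A B Q R W D₀ Kstar Sgstar ≤ Cost γ τ A B Q R W D₀ K Sg := by
  have hγ1' : (0:ℝ) < 1 - γ := by linarith
  have hpos : (0:ℝ) < 1 / (1 - γ) := by positivity
  simp only [Cost]
  set P : Matrix (Fin n) (Fin n) ℝ := Pmat γ A B Q R K with hPdef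
  set P' : Matrix (Fin n) (Fin n) ℝ := Pmat γ A B Q R Kstar with hP'def
  have hPT : P = LQ3.Tsum γ (A - B * K) (Q + Kᵀ * R * K) := rfl
  have hPT' : P' = LQ3.Tsum γ (A - B * Kstar) (Q + Kstarᵀ * R * Kstar) := rfl
  have hCQ : (Q + Kᵀ * R * K).PosSemidef :=
    hQ.add (LQ4.psd_of_transpose_form hR.posSemidef K)
  have hCQ' : (Q + Kstarᵀ * R * Kstar).PosSemidef :=
    hQ.add (LQ4.psd_of_transpose_form hR.posSemidef Kstar)
  have hPpsd : P.PosSemidef := by rw [hPT]; exact LQ3.psd_tsum hγ0 hK hCQ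
  have hP'psd : P'.PosSemidef := by rw [hPT']; exact LQ3.psd_tsum hγ0 hKstar hCQ'
  have hPb : P = (Q + Kᵀ * R * K) + γ • ((A - B * K)ᵀ * P * (A - B * K)) := by
    conv_lhs => rw [hPT]
    rw [hPT]
    exact LQ3.bellman hγ0 hK _
  have hPb' : P' = (Q + Kstarᵀ * R * Kstar) +
      γ • ((A - B * Kstar)ᵀ * P' * (A - B * Kstar)) := by
    conv_lhs => rw [hPT']
    rw [hPT']
    exact LQ3.bellman hγ0 hKstar _
  have hBPB' : (γ • (Bᵀ * P' * B)).PosSemidef :=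
    LQ4.psd_smul (LQ4.psd_of_transpose_form hP'psd B) hγ0.le
  have hM' : (R + γ • (Bᵀ * P' * B)).PosDef := hR.add_posSemidef hBPB'
  have hdetM' : IsUnit (R + γ • (Bᵀ * P' * B)).det :=
    (Matrix.isUnit_iff_isUnit_det _).mp hM'.isUnit
  have hMK : (R + γ • (Bᵀ * P' * B)) * Kstar = γ • (Bᵀ * P' * A) := by
    conv_lhs => rw [hfix]
    rw [Matrix.mul_smul, ← Matrix.mul_assoc, Matrix.mul_nonsing_inv _ hdetM', Matrix.one_mul]
  have he : R * Kstar = γ • (Bᵀ * P' * (A - B * Kstar)) := by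
    have h2 := hMK
    rw [Matrix.add_mul, Matrix.smul_mul, Matrix.mul_assoc (Bᵀ * P') B Kstar] at h2
    have h3 : R * Kstar = γ • (Bᵀ * P' * A) - γ • (Bᵀ * P' * (B * Kstar)) :=
      eq_sub_of_add_eq h2
    rw [h3, ← smul_sub, ← Matrix.mul_sub]
  set G : Matrix (Fin n) (Fin n) ℝ := γ • P' with hG
  have hconv : ∀ (m l : ℕ) (X : Matrix (Fin m) (Fin n) ℝ) (Y : Matrix (Fin n) (Fin l) ℝ),
      γ • (X * P' * Y) = X * G * Y := by
    intro m l X Y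
    rw [hG, Matrix.mul_smul, Matrix.smul_mul]
  have hGt : Gᵀ = G := by
    rw [hG, Matrix.transpose_smul, LQ4.herm_transpose hP'psd.1]
  have hRt : Rᵀ = R := LQ4.herm_transpose hR.isHermitian
  have heG : R * Kstar = Bᵀ * G * (A - B * Kstar) := by
    rw [he]; exact hconv _ _ Bᵀ (A - B * Kstar)
  have RI : Q + Kᵀ * R * K + (A - B * K)ᵀ * G * (A - B * K) =
      (Q + Kstarᵀ * R * Kstar + (A - B * Kstar)ᵀ * G * (A - B * Kstar))
      + (K - Kstar)ᵀ * (R + Bᵀ * G * B) * (K - Kstar)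
      + (K - Kstar)ᵀ * (R * Kstar - Bᵀ * G * (A - B * Kstar))
      + (R * Kstar - Bᵀ * G * (A - B * Kstar))ᵀ * (K - Kstar) := by
    simp only [Matrix.transpose_sub, Matrix.transpose_mul, Matrix.transpose_transpose,
      hGt, hRt]
    simp only [Matrix.mul_sub, Matrix.sub_mul, Matrix.mul_add, Matrix.add_mul,
      Matrix.mul_assoc]
    abel
  have hzero : R * Kstar - Bᵀ * G * (A - B * Kstar) = 0 := sub_eq_zero_of_eq heG
  have hP'alt : P' = Q + Kstarᵀ * R * Kstar +
      (A - B * Kstar)ᵀ * G * (A - B * Kstar) := by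
    conv_lhs => rw [hPb']
    rw [hconv]
  have hZ : Q + Kᵀ * R * K + γ • ((A - B * K)ᵀ * P' * (A - B * K)) =
      P' + (K - Kstar)ᵀ * (R + Bᵀ * G * B) * (K - Kstar) := by
    rw [hconv _ _ (A - B * K)ᵀ (A - B * K), RI, hzero]
    rw [← hP'alt]
    simp
  have hRG : R + Bᵀ * G * B = R + γ • (Bᵀ * P' * B) := by
    rw [hconv]
  have hZpsd : ((K - Kstar)ᵀ * (R + Bᵀ * G * B) * (K - Kstar)).PosSemidef := by
    rw [hRG]
    exact LQ4.psd_of_transpose_form hM'.posSemidef (K - Kstar)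
  have hdp : P - P' = (K - Kstar)ᵀ * (R + Bᵀ * G * B) * (K - Kstar) +
      γ • ((A - B * K)ᵀ * (P - P') * (A - B * K)) := by
    have h2 : P' = Q + Kᵀ * R * K + γ • ((A - B * K)ᵀ * P' * (A - B * K)) -
        (K - Kstar)ᵀ * (R + Bᵀ * G * B) * (K - Kstar) := by
      rw [hZ]; abel
    exact LQ6.diff_eq γ (A - B * K) (Q + Kᵀ * R * K) _ P P' hPb h2
  have hΔpsd : (P - P').PosSemidef := by
    rw [LQ3.tsum_unique hγ0 hK hdp]
    exact LQ3.psd_tsum hγ0 hK hZpsd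
  -- trace inequalities
  have hA1 : (D₀ * P').trace ≤ (D₀ * P).trace := by
    have h0 := LQ4.trace_mul_nonneg hD₀ hΔpsd
    rw [Matrix.mul_sub, Matrix.trace_sub] at h0
    linarith
  have hW1 : (W * P').trace ≤ (W * P).trace := by
    have h0 := LQ4.trace_mul_nonneg hW hΔpsd
    rw [Matrix.mul_sub, Matrix.trace_sub] at h0
    linarith
  have hT1 : (Sg * (R + γ • (Bᵀ * P' * B))).trace ≤
      (Sg * (R + γ • (Bᵀ * P * B))).trace := by
    have hpsd2 : (γ • (Bᵀ * (P - P') * B)).PosSemidef :=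
      LQ4.psd_smul (LQ4.psd_of_transpose_form hΔpsd B) hγ0.le
    have h0 := LQ4.trace_mul_nonneg hSg.posSemidef hpsd2
    have hdiff : Sg * (R + γ • (Bᵀ * P * B)) - Sg * (R + γ • (Bᵀ * P' * B)) =
        Sg * (γ • (Bᵀ * (P - P') * B)) := by
      rw [← Matrix.mul_sub]
      congr 1
      rw [add_sub_add_left_eq_sub, ← smul_sub, Matrix.mul_sub, Matrix.sub_mul]
    have h1 : 0 ≤ (Sg * (R + γ • (Bᵀ * P * B))).trace -
        (Sg * (R + γ • (Bᵀ * P' * B))).trace := by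
      rw [← Matrix.trace_sub, hdiff]
      exact h0
    linarith
  -- entropy part
  have hτ2 : (0:ℝ) < τ / 2 := by positivity
  have hSgstarPD : Sgstar.PosDef := by
    rw [hSgstar]; exact LQ5.pd_smul hM'.inv hτ2
  have htrSgstar : (Sgstar * (R + γ • (Bᵀ * P' * B))).trace = (τ/2) * (k:ℝ) := by
    rw [hSgstar, Matrix.smul_mul, Matrix.nonsing_inv_mul _ hdetM', Matrix.trace_smul]
    simp [Matrix.trace_one]
  have hdetSgstar : Sgstar.det = (τ/2)^k * (R + γ • (Bᵀ * P' * B)).det⁻¹ := by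
    rw [hSgstar, Matrix.det_smul, Matrix.det_nonsing_inv]
    simp
  have hdetM'pos : 0 < (R + γ • (Bᵀ * P' * B)).det := hM'.det_pos
  have h4 : (Sgstar * (R + γ • (Bᵀ * P' * B))).trace - (τ/2) * Real.log Sgstar.det ≤
      (Sg * (R + γ • (Bᵀ * P' * B))).trace - (τ/2) * Real.log Sg.det := by
    have hc : (0:ℝ) < (τ/2)⁻¹ := by positivity
    have hcore := LQ5.entropy_core hM' hSg hc
    rw [Real.log_inv] at hcore
    have h5 := mul_le_mul_of_nonneg_left hcore hτ2.le
    have h6 : (τ/2) * ((τ/2)⁻¹ * (Sg * (R + γ • (Bᵀ * P' * B))).trace) =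
        (Sg * (R + γ • (Bᵀ * P' * B))).trace := by
      rw [← mul_assoc, mul_inv_cancel₀ hτ2.ne', one_mul]
    rw [h6] at h5
    rw [htrSgstar, hdetSgstar, Real.log_mul (by positivity) (by positivity),
      Real.log_pow, Real.log_inv]
    nlinarith [h5]
  have hπ : (0:ℝ) < 2 * Real.pi := by positivity
  have hlogSg : Real.log ((2 * Real.pi)^k * Sg.det) =
      (k:ℝ) * Real.log (2 * Real.pi) + Real.log Sg.det := by
    rw [Real.log_mul (by positivity) hSg.det_pos.ne', Real.log_pow]
  have hlogSgstar : Real.log ((2 * Real.pi)^k * Sgstar.det) =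
      (k:ℝ) * Real.log (2 * Real.pi) + Real.log Sgstar.det := by
    rw [Real.log_mul (by positivity) hSgstarPD.det_pos.ne', Real.log_pow]
  have hw : γ * (W * P').trace ≤ γ * (W * P).trace :=
    mul_le_mul_of_nonneg_left hW1 hγ0.le
  have hsum : (Sgstar * (R + γ • (Bᵀ * P' * B))).trace -
        τ / 2 * ((k:ℝ) + Real.log ((2 * Real.pi)^k * Sgstar.det)) +
        γ * (W * P').trace ≤
      (Sg * (R + γ • (Bᵀ * P * B))).trace -
        τ / 2 * ((k:ℝ) + Real.log ((2 * Real.pi)^k * Sg.det)) +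
        γ * (W * P).trace := by
    rw [hlogSg, hlogSgstar]
    have e1 : ∀ x : ℝ, τ / 2 * ((k:ℝ) + ((k:ℝ) * Real.log (2 * Real.pi) + x)) =
        τ / 2 * (k:ℝ) + τ / 2 * ((k:ℝ) * Real.log (2 * Real.pi)) + τ / 2 * x := by
      intro x; ring
    rw [e1, e1]
    linarith [h4, hT1, hw]
  exact add_le_add hA1 (mul_le_mul_of_nonneg_left hsum hpos.le)
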